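/- Let Ω ⊂ ℝ² be a bounded convex domain, u ∈ H¹₀(Ω) the weak solution of −Δu = f with f ∈ L²(Ω), and v ∈ H¹₀(Ω). Then for every ε > 0 and every z ∈ (L²(Ω))² with div z ∈ L²(Ω): ‖∇(v−u)‖²_{L²(Ω)} ≤ (1+ε)·‖∇v + z‖²_{L²(Ω)} + c_Ω·(1 + 1/ε)·‖div z − f‖²_{L²(Ω)}, where c_Ω is the constant in the Friedrichs inequality ‖w‖²_{L²(Ω)} ≤ c_Ω·‖∇w‖²_{L²(Ω)} for w ∈ H¹₀(Ω). -/

import Mathlib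

/-- The Repin–Frolov a posteriori error majorant (2.5) for the Poisson equation,
σ ≡ 0, A = I, homogeneous Dirichlet conditions.  Abstract formalization with
the Friedrichs inequality as a hypothesis. -/
theorem stmt_5 {L W : Type*} [NormedAddCommGroup L] [InnerProductSpace ℝ L]
    [NormedAddCommGroup W] [InnerProductSpace ℝ W]
    (grad : L →ₗ[ℝ] W) (dvg : W →ₗ[ℝ] L)
    (cΩ : ℝ) (hcΩ : 0 ≤ cΩ)
    -- Friedrichs inequality on H¹₀(Ω)
    (hFriedrichs : ∀ w : L, ‖w‖ ^ 2 ≤ cΩ * ‖grad w‖ ^ 2)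
    (f u v : L) (z : W)
    -- u is the weak solution of −Δu = f
    (hweak : ∀ φ : L, (inner ℝ (grad u) (grad φ) : ℝ) = (inner ℝ f φ : ℝ))
    -- integration by parts for z ∈ H(Ω, div)
    (hibp : ∀ φ : L, (inner ℝ z (grad φ) : ℝ) = -(inner ℝ (dvg z) φ : ℝ)) :
    ∀ ε : ℝ, 0 < ε →
      ‖grad (v - u)‖ ^ 2 ≤ (1 + ε) * ‖grad v + z‖ ^ 2 +
        cΩ * (1 + 1 / ε) * ‖dvg z - f‖ ^ 2 := by
  intro ε hε
  set w : L := v - u with hw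
  -- error identity
  have key : ‖grad w‖ ^ 2 =
      (inner ℝ (grad v + z) (grad w) : ℝ) + (inner ℝ (dvg z - f) w : ℝ) := by
    have h1 : (‖grad w‖ : ℝ) ^ 2 = (inner ℝ (grad w) (grad w) : ℝ) :=
      (real_inner_self_eq_norm_sq (grad w)).symm
    have h2 : grad w = grad v - grad u := by rw [hw, map_sub]
    rw [h1]
    have hz := hibp w
    have hu := hweak w
    rw [h2] at *
    rw [inner_add_left, inner_sub_left, inner_sub_left, hz, hu]
    ring
  set G := ‖grad w‖ with hG
  set A := ‖grad v + z‖ with hA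
  set B := ‖dvg z - f‖ with hB
  have hGnn : 0 ≤ G := norm_nonneg _
  have hAnn : 0 ≤ A := norm_nonneg _
  have hBnn : 0 ≤ B := norm_nonneg _
  set s := Real.sqrt cΩ with hs
  have hs2 : s ^ 2 = cΩ := Real.sq_sqrt hcΩ
  have hsnn : 0 ≤ s := Real.sqrt_nonneg _
  -- ‖w‖ ≤ s * G
  have hwG : ‖w‖ ≤ s * G := by
    have h := hFriedrichs w
    have hsq : ‖w‖ ^ 2 ≤ (s * G) ^ 2 := by rw [mul_pow, hs2]; exact h
    have hsG : 0 ≤ s * G := mul_nonneg hsnn hGnn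
    nlinarith [norm_nonneg w]
  -- Cauchy–Schwarz estimates
  have hG2 : G ^ 2 ≤ A * G + B * (s * G) := by
    have c1 : (inner ℝ (grad v + z) (grad w) : ℝ) ≤ A * G := real_inner_le_norm _ _
    have c2 : (inner ℝ (dvg z - f) w : ℝ) ≤ B * ‖w‖ := real_inner_le_norm _ _
    have c3 : B * ‖w‖ ≤ B * (s * G) := mul_le_mul_of_nonneg_left hwG hBnn
    linarith [key]
  have hGle : G ≤ A + s * B := by
    rcases eq_or_lt_of_le hGnn with h0 | h0
    · nlinarith
    · have := (mul_le_mul_iff_of_pos_right h0).mp (by nlinarith : G * G ≤ (A + s * B) * G)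
      linarith
  have hεδ : ε * (1 / ε) = 1 := mul_one_div_cancel (ne_of_gt hε)
  have hfin : G ^ 2 ≤ (1 + ε) * A ^ 2 + s ^ 2 * (1 + 1 / ε) * B ^ 2 := by
    have h1 : G ^ 2 ≤ (A + s * B) ^ 2 := by nlinarith
    nlinarith [sq_nonneg (ε * A - s * B), mul_pos hε hε, sq_nonneg A, sq_nonneg (s * B), hε.le]
  calc G ^ 2 ≤ (1 + ε) * A ^ 2 + s ^ 2 * (1 + 1 / ε) * B ^ 2 := hfin
    _ = (1 + ε) * A ^ 2 + cΩ * (1 + 1 / ε) * B ^ 2 := by rw [hs2]
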